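/- Let h be a strictly convex continuously differentiable function on [0,1] with h(0) = 0, and let F and G be continuous cumulative distribution functions on the real line. Then ∫_{−∞}^{∞} h(F(x)) dG(x) + ∫_{−∞}^{∞} h(G(x)) dF(x) ≥ 2·∫₀¹ h(u) du, with equality if and only if F(x) = G(x) for all x. -/

import Mathlib

open MeasureTheory Filter Topology Set
open scoped ENNReal

lemma cdf_nonneg (K : StieltjesFunction ℝ) (hb : Tendsto K atBot (𝓝 0)) (x : ℝ) : 0 ≤ K x :=
  le_of_tendsto hb ((eventually_le_atBot x).mono fun y hy => K.mono hy)

lemma cdf_le_one (K : StieltjesFunction ℝ) (ht : Tendsto K atTop (𝓝 1)) (x : ℝ) : K x ≤ 1 :=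
  ge_of_tendsto ht ((eventually_ge_atTop x).mono fun y hy => K.mono hy)

/-- probability integral transform -/
lemma pit (K : StieltjesFunction ℝ) (hc : Continuous K)
    (hb : Tendsto K atBot (𝓝 0)) (ht : Tendsto K atTop (𝓝 1)) :
    Measure.map K K.measure = volume.restrict (Ioc (0:ℝ) 1) := by
  haveI : IsProbabilityMeasure K.measure := K.isProbabilityMeasure hb ht
  refine Measure.ext_of_Iic _ _ fun t => ?_
  rw [Measure.map_apply hc.measurable measurableSet_Iic,
    Measure.restrict_apply measurableSet_Iic]
  rcases lt_or_ge t 0 with htneg | ht0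
  · have h1 : (K ⁻¹' Iic t) = ∅ := by
      ext x; simp only [mem_preimage, mem_Iic, mem_empty_iff_false, iff_false, not_le]
      exact htneg.trans_le (cdf_nonneg K hb x)
    have h2 : Iic t ∩ Ioc (0:ℝ) 1 = ∅ := by
      ext x; simp only [mem_inter_iff, mem_Iic, mem_Ioc, mem_empty_iff_false, iff_false]
      rintro ⟨hx1, hx2, -⟩; exact absurd (hx2.trans_le hx1) (not_lt.2 htneg.le)
    simp [h1, h2]
  rcases le_or_gt 1 t with ht1 | ht1
  · have h1 : (K ⁻¹' Iic t) = univ := by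
      ext x; simp only [mem_preimage, mem_Iic, mem_univ, iff_true]
      exact (cdf_le_one K ht x).trans ht1
    have h2 : Iic t ∩ Ioc (0:ℝ) 1 = Ioc 0 1 := by
      rw [inter_eq_right]; exact fun x hx => hx.2.trans ht1
    simp [h1, h2, Real.volume_Ioc, measure_univ]
  -- now 0 ≤ t < 1
  have h2 : Iic t ∩ Ioc (0:ℝ) 1 = Ioc 0 t := by
    ext x; simp only [mem_inter_iff, mem_Iic, mem_Ioc]
    constructor
    · rintro ⟨hx1, hx2, -⟩; exact ⟨hx2, hx1⟩
    · rintro ⟨hx1, hx2⟩; exact ⟨hx2, hx1, hx2.trans (le_of_lt ht1)⟩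
  rw [h2, Real.volume_Ioc]
  have hSclosed : IsClosed (K ⁻¹' Iic t) := isClosed_Iic.preimage hc
  rcases eq_empty_or_nonempty (K ⁻¹' Iic t) with hS | hS
  ·
    have ht0' : t ≤ 0 := by
      by_contra hpos
      push_neg at hpos
      obtain ⟨x, hx⟩ := (hb.eventually (eventually_le_nhds hpos)).exists
      exact absurd hx (eq_empty_iff_forall_notMem.1 hS x)
    have heq0 : t = 0 := le_antisymm ht0' ht0
    subst heq0
    simp [hS]
  · have hbdd : BddAbove (K ⁻¹' Iic t) := by
      obtain ⟨B, hB⟩ := (ht.eventually (eventually_gt_nhds ht1)).exists_forall_of_atTop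
      exact ⟨B, fun x hx => by
        by_contra hxB
        push_neg at hxB
        exact absurd (mem_Iic.1 hx) (not_le.2 (hB x hxB.le))⟩
    set s := sSup (K ⁻¹' Iic t) with hs
    have hsmem : s ∈ K ⁻¹' Iic t := hSclosed.csSup_mem hS hbdd
    have hSeq : (K ⁻¹' Iic t) = Iic s := by
      apply Subset.antisymm (fun x hx => le_csSup hbdd hx)
      intro x hx
      exact mem_preimage.2 (le_trans (K.mono hx) (mem_Iic.1 (mem_preimage.1 hsmem)))
    have hKs : K s = t := by
      rcases lt_or_eq_of_le (mem_Iic.1 (mem_preimage.1 hsmem)) with hlt | heq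
      · exfalso
        have : ∀ᶠ x in 𝓝 s, K x < t := hc.continuousAt.eventually_lt_const hlt
        obtain ⟨ε, hε, hball⟩ := Metric.eventually_nhds_iff.1 this
        have hd : dist (s + ε/2) s < ε := by
          rw [Real.dist_eq]
          rw [show s + ε/2 - s = ε/2 by ring, abs_of_pos (half_pos hε)]
          exact half_lt_self hε
        have hmem : s + ε/2 ∈ K ⁻¹' Iic t := mem_preimage.2 (le_of_lt (hball hd))
        have := le_csSup hbdd hmem
        linarith
      · exact heq
    rw [hSeq, K.measure_Iic hb, hKs, sub_zero]

noncomputable def midSt (F G : StieltjesFunction ℝ) (hFc : Continuous F) (hGc : Continuous G) :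
    StieltjesFunction ℝ where
  toFun x := (F x + G x) / 2
  mono' a b hab := by
    have h1 := F.mono hab; have h2 := G.mono hab; dsimp; linarith
  right_continuous' x := ((hFc.add hGc).div_const 2).continuousWithinAt

@[simp] lemma midSt_apply (F G : StieltjesFunction ℝ) (hFc : Continuous F) (hGc : Continuous G)
    (x : ℝ) : midSt F G hFc hGc x = (F x + G x) / 2 := rfl

lemma midSt_measure (F G : StieltjesFunction ℝ) (hFc : Continuous F) (hGc : Continuous G) :
    (midSt F G hFc hGc).measure
      = (2⁻¹ : ℝ≥0∞) • F.measure + (2⁻¹ : ℝ≥0∞) • G.measure := by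
  refine Measure.ext_of_Ioc _ _ fun a b hab => ?_
  rw [StieltjesFunction.measure_Ioc]
  simp only [Measure.add_apply, Measure.smul_apply, StieltjesFunction.measure_Ioc, smul_eq_mul,
    midSt_apply]
  have h1 : (0:ℝ) ≤ F b - F a := sub_nonneg.2 (F.mono hab.le)
  have h2 : (0:ℝ) ≤ G b - G a := sub_nonneg.2 (G.mono hab.le)
  rw [show (F b + G b) / 2 - (F a + G a) / 2 = (F b - F a)/2 + (G b - G a)/2 by ring,
    ENNReal.ofReal_add (by positivity) (by positivity)]
  congr 1
  · rw [show (2⁻¹ : ℝ≥0∞) = ENNReal.ofReal (2⁻¹ : ℝ) by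
      simp [ENNReal.ofReal_inv_of_pos],
      ← ENNReal.ofReal_mul (by norm_num)]
    congr 1; ring
  · rw [show (2⁻¹ : ℝ≥0∞) = ENNReal.ofReal (2⁻¹ : ℝ) by
      simp [ENNReal.ofReal_inv_of_pos],
      ← ENNReal.ofReal_mul (by norm_num)]
    congr 1; ring

lemma integrable_bdd {f : ℝ → ℝ} {C : ℝ} (hf : Continuous f) (hC : ∀ x, ‖f x‖ ≤ C)
    (μ : Measure ℝ) [IsFiniteMeasure μ] : Integrable f μ :=
  Integrable.mono' (integrable_const C) hf.aestronglyMeasurable (ae_of_all _ hC)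

lemma pit_integral (K : StieltjesFunction ℝ) (hc : Continuous K)
    (hb : Tendsto K atBot (𝓝 0)) (htp : Tendsto K atTop (𝓝 1))
    {f : ℝ → ℝ} (hf : Continuous f) :
    ∫ x, f (K x) ∂K.measure = ∫ u in Ioc (0:ℝ) 1, f u := by
  have := integral_map (μ := K.measure) hc.measurable.aemeasurable
    (f := f) hf.aestronglyMeasurable
  rw [pit K hc hb htp] at this
  exact this.symm

theorem convex_cdf_inequality
    (h : ℝ → ℝ) (hconv : StrictConvexOn ℝ (Set.Icc 0 1) h)
    (hdiff : ContDiffOn ℝ 1 h (Set.Icc 0 1)) (h0 : h 0 = 0)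
    (F G : StieltjesFunction ℝ)
    (hFcont : Continuous F) (hGcont : Continuous G)
    (hFbot : Tendsto F atBot (𝓝 0)) (hFtop : Tendsto F atTop (𝓝 1))
    (hGbot : Tendsto G atBot (𝓝 0)) (hGtop : Tendsto G atTop (𝓝 1)) :
    (∫ x, h (F x) ∂G.measure) + (∫ x, h (G x) ∂F.measure)
      ≥ 2 * ∫ u in (0:ℝ)..1, h u ∧
    ((∫ x, h (F x) ∂G.measure) + (∫ x, h (G x) ∂F.measure)
      = 2 * ∫ u in (0:ℝ)..1, h u ↔ ∀ x, F x = G x) := by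
  have hF01 : ∀ x, F x ∈ Icc (0:ℝ) 1 := fun x => ⟨cdf_nonneg F hFbot x, cdf_le_one F hFtop x⟩
  have hG01 : ∀ x, G x ∈ Icc (0:ℝ) 1 := fun x => ⟨cdf_nonneg G hGbot x, cdf_le_one G hGtop x⟩
  set M := midSt F G hFcont hGcont with hMdef
  have hMcont : Continuous M := (hFcont.add hGcont).div_const 2
  have hMbot : Tendsto M atBot (𝓝 0) := by
    have h2 := (hFbot.add hGbot).div_const 2
    norm_num at h2
    exact h2
  have hMtop : Tendsto M atTop (𝓝 1) := by
    have h2 := (hFtop.add hGtop).div_const 2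
    norm_num at h2
    exact h2
  haveI := F.isProbabilityMeasure hFbot hFtop
  haveI := G.isProbabilityMeasure hGbot hGtop
  haveI := M.isProbabilityMeasure hMbot hMtop
  -- clamp h into a globally continuous bounded function q
  set cl : ℝ → ℝ := fun u => max 0 (min u 1) with hcldef
  have hclmem : ∀ u, cl u ∈ Icc (0:ℝ) 1 :=
    fun u => ⟨le_max_left _ _, max_le zero_le_one (min_le_right _ _)⟩
  have hcleq : ∀ u ∈ Icc (0:ℝ) 1, cl u = u := fun u hu => by
    simp only [hcldef]
    rw [min_eq_left hu.2, max_eq_right hu.1]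
  set q : ℝ → ℝ := fun u => h (cl u) with hqdef
  have hqeq : ∀ u ∈ Icc (0:ℝ) 1, q u = h u := fun u hu => by
    simp only [hqdef]; rw [hcleq u hu]
  have hclcont : Continuous cl := continuous_const.max (continuous_id.min continuous_const)
  have hqcont : Continuous q := hdiff.continuousOn.comp_continuous hclcont hclmem
  obtain ⟨C, hC⟩ := isCompact_Icc.exists_bound_of_continuousOn hdiff.continuousOn
  have hqbd : ∀ u, ‖q u‖ ≤ C := fun u => hC _ (hclmem u)
  -- integrability
  have int_of : ∀ (K : StieltjesFunction ℝ), Continuous K →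
      ∀ (μ : Measure ℝ), IsFiniteMeasure μ → Integrable (fun x => q (K x)) μ := by
    intro K hK μ hμ
    exact integrable_bdd (hqcont.comp hK) (fun x => hqbd _) μ
  have intFF := int_of F hFcont F.measure inferInstance
  have intFG := int_of F hFcont G.measure inferInstance
  have intFM := int_of F hFcont M.measure inferInstance
  have intGF := int_of G hGcont F.measure inferInstance
  have intGG := int_of G hGcont G.measure inferInstance
  have intGM := int_of G hGcont M.measure inferInstance
  have intMM := int_of M hMcont M.measure inferInstance
  -- PIT values
  set c' : ℝ := ∫ u in Ioc (0:ℝ) 1, q u with hc'def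
  have eF : ∫ x, q (F x) ∂F.measure = c' := pit_integral F hFcont hFbot hFtop hqcont
  have eG : ∫ x, q (G x) ∂G.measure = c' := pit_integral G hGcont hGbot hGtop hqcont
  have eM : ∫ x, q (M x) ∂M.measure = c' := pit_integral M hMcont hMbot hMtop hqcont
  have hcc : ∫ u in (0:ℝ)..1, h u = c' := by
    rw [intervalIntegral.integral_of_le zero_le_one]
    exact setIntegral_congr_fun measurableSet_Ioc
      (fun u hu => (hqeq u ⟨hu.1.le, hu.2⟩).symm)
  -- decomposition of integrals against M.measure
  have decomp : ∀ (f : ℝ → ℝ), Integrable f F.measure → Integrable f G.measure →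
      ∫ x, f x ∂M.measure = (∫ x, f x ∂F.measure) / 2 + (∫ x, f x ∂G.measure) / 2 := by
    intro f hf hg
    rw [show M.measure = (2⁻¹ : ℝ≥0∞) • F.measure + (2⁻¹ : ℝ≥0∞) • G.measure from
      midSt_measure F G hFcont hGcont]
    rw [integral_add_measure (hf.smul_measure (by norm_num)) (hg.smul_measure (by norm_num)),
      integral_smul_measure, integral_smul_measure]
    norm_num [ENNReal.toReal_inv]
    ring
  set I1 : ℝ := ∫ x, q (F x) ∂G.measure with hI1def
  set I2 : ℝ := ∫ x, q (G x) ∂F.measure with hI2def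
  set Δ : ℝ → ℝ := fun x => q (F x) + q (G x) - 2 * q (M x) with hΔdef
  have hΔint : Integrable Δ M.measure := (intFM.add intGM).sub (intMM.const_mul 2)
  have hMhalf : ∀ x, M x = (F x + G x) / 2 := fun x => rfl
  have hΔnonneg : ∀ x, 0 ≤ Δ x := by
    intro x
    have hcv := hconv.convexOn.2 (hF01 x) (hG01 x)
      (by norm_num : (0:ℝ) ≤ 1/2) (by norm_num : (0:ℝ) ≤ 1/2) (by norm_num)
    simp only [smul_eq_mul] at hcv
    have e1 : q (F x) = h (F x) := hqeq _ (hF01 x)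
    have e2 : q (G x) = h (G x) := hqeq _ (hG01 x)
    have e3 : q (M x) = h ((F x + G x)/2) := by rw [hqeq _ ⟨cdf_nonneg M hMbot x, cdf_le_one M hMtop x⟩, hMhalf]
    simp only [hΔdef, e1, e2, e3]
    have : (1:ℝ)/2 * F x + 1/2 * G x = (F x + G x)/2 := by ring
    rw [this] at hcv
    linarith
  have hΔpos : ∀ x, F x ≠ G x → 0 < Δ x := by
    intro x hne
    have hcv := hconv.2 (hF01 x) (hG01 x) hne
      (by norm_num : (0:ℝ) < 1/2) (by norm_num : (0:ℝ) < 1/2) (by norm_num)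
    simp only [smul_eq_mul] at hcv
    have e1 : q (F x) = h (F x) := hqeq _ (hF01 x)
    have e2 : q (G x) = h (G x) := hqeq _ (hG01 x)
    have e3 : q (M x) = h ((F x + G x)/2) := by rw [hqeq _ ⟨cdf_nonneg M hMbot x, cdf_le_one M hMtop x⟩, hMhalf]
    simp only [hΔdef, e1, e2, e3]
    have : (1:ℝ)/2 * F x + 1/2 * G x = (F x + G x)/2 := by ring
    rw [this] at hcv
    linarith
  have key : ∫ x, Δ x ∂M.measure = (I1 + I2) / 2 - c' := by
    simp only [hΔdef]
    have intsum : Integrable (fun x => q (F x) + q (G x)) M.measure := intFM.add intGM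
    have int2 : Integrable (fun x => 2 * q (M x)) M.measure := intMM.const_mul 2
    rw [integral_sub intsum int2, integral_add intFM intGM,
      integral_const_mul, eM, decomp _ intFF intFG, decomp _ intGF intGG, eF, eG]
    simp only [← hI1def, ← hI2def]
    ring
  -- rewrite goal integrals
  have gF : (fun x => h (F x)) = fun x => q (F x) := funext fun x => (hqeq _ (hF01 x)).symm
  have gG : (fun x => h (G x)) = fun x => q (G x) := funext fun x => (hqeq _ (hG01 x)).symm
  have goalF : (∫ x, h (F x) ∂G.measure) = I1 := by rw [hI1def]; exact congrArg _ gF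
  have goalG : (∫ x, h (G x) ∂F.measure) = I2 := by rw [hI2def]; exact congrArg _ gG
  rw [goalF, goalG, hcc]
  have hnn : 0 ≤ ∫ x, Δ x ∂M.measure := integral_nonneg hΔnonneg
  constructor
  · rw [key] at hnn; linarith
  constructor
  · -- equality implies F = G
    intro heq
    have hzero : ∫ x, Δ x ∂M.measure = 0 := by rw [key]; linarith
    have hae : Δ =ᵐ[M.measure] 0 :=
      (integral_eq_zero_iff_of_nonneg_ae (ae_of_all _ hΔnonneg) hΔint).1 hzero
    have hM0 : M.measure {x | Δ x ≠ 0} = 0 := by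
      have := hae
      rw [Filter.EventuallyEq, ae_iff] at this
      simpa using this
    have hsubΔ : {x | F x ≠ G x} ⊆ {x | Δ x ≠ 0} := fun x hx => ne_of_gt (hΔpos x hx)
    have hMFG : M.measure {x | F x ≠ G x} = 0 := measure_mono_null hsubΔ hM0
    have hboth : F.measure {x | F x ≠ G x} = 0 ∧ G.measure {x | F x ≠ G x} = 0 := by
      rw [show M.measure = (2⁻¹ : ℝ≥0∞) • F.measure + (2⁻¹ : ℝ≥0∞) • G.measure from
        midSt_measure F G hFcont hGcont] at hMFG
      simp only [Measure.add_apply, Measure.smul_apply, smul_eq_mul, add_eq_zero,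
        mul_eq_zero] at hMFG
      refine ⟨?_, ?_⟩
      · rcases hMFG.1 with h' | h'
        · exact absurd h' (by norm_num)
        · exact h'
      · rcases hMFG.2 with h' | h'
        · exact absurd h' (by norm_num)
        · exact h'
    intro x₀
    by_contra hne
    set Z : Set ℝ := Iic x₀ ∩ {x | F x = G x} with hZdef
    rcases eq_empty_or_nonempty Z with hZe | hZne
    · have hsub3 : Iic x₀ ⊆ {x | F x ≠ G x} := by
        intro x hx
        intro hFGx
        exact eq_empty_iff_forall_notMem.1 hZe x ⟨hx, hFGx⟩
      have hF0 : F.measure (Iic x₀) = 0 := measure_mono_null hsub3 hboth.1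
      have hG0 : G.measure (Iic x₀) = 0 := measure_mono_null hsub3 hboth.2
      rw [F.measure_Iic hFbot, sub_zero, ENNReal.ofReal_eq_zero] at hF0
      rw [G.measure_Iic hGbot, sub_zero, ENNReal.ofReal_eq_zero] at hG0
      have := cdf_nonneg F hFbot x₀
      have := cdf_nonneg G hGbot x₀
      apply hne
      linarith
    · have hZclosed : IsClosed Z := isClosed_Iic.inter (isClosed_eq hFcont hGcont)
      have hbddZ : BddAbove Z := ⟨x₀, fun x hx => hx.1⟩
      set a := sSup Z with hadef
      have haZ : a ∈ Z := hZclosed.csSup_mem hZne hbddZ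
      have hax₀ : a ≤ x₀ := haZ.1
      have hsub2 : Ioc a x₀ ⊆ {x | F x ≠ G x} := by
        intro x hx hFGx
        exact absurd (le_csSup hbddZ (⟨hx.2, hFGx⟩ : x ∈ Z)) (not_le.2 hx.1)
      have hF0 : F.measure (Ioc a x₀) = 0 := measure_mono_null hsub2 hboth.1
      have hG0 : G.measure (Ioc a x₀) = 0 := measure_mono_null hsub2 hboth.2
      rw [F.measure_Ioc, ENNReal.ofReal_eq_zero, sub_nonpos] at hF0
      rw [G.measure_Ioc, ENNReal.ofReal_eq_zero, sub_nonpos] at hG0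
      have hFa : F x₀ = F a := le_antisymm hF0 (F.mono hax₀)
      have hGa : G x₀ = G a := le_antisymm hG0 (G.mono hax₀)
      exact hne (by rw [hFa, hGa]; exact haZ.2)
  · -- F = G implies equality
    intro hFG
    have hFGeq : F = G := StieltjesFunction.ext hFG
    subst hFGeq
    rw [hI1def, hI2def, eG]
    have : (∫ x, q (F x) ∂F.measure) = c' := eF
    linarith [eF]
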